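/- Let β < 0, let q(x) = c₂x² + c₁x + c₀ be a quadratic polynomial with positive leading coefficient c₂ > 0, and let s > 0. Then the equation exp(βx)·q(x) = s has at most three distinct real solutions x. -/

import Mathlib

open Set Real

theorem stmt_0 (β c₀ c₁ c₂ s : ℝ) (hβ : β < 0) (hc₂ : 0 < c₂) (hs : 0 < s) :
    {x : ℝ | Real.exp (β * x) * (c₂ * x ^ 2 + c₁ * x + c₀) = s}.encard ≤ 3 := by
  set v0 : ℝ → ℝ := fun x => c₂ * x ^ 2 + c₁ * x + c₀ - s * Real.exp (-β * x) with hv0def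
  set v1 : ℝ → ℝ := fun x => 2 * c₂ * x + c₁ + s * β * Real.exp (-β * x) with hv1def
  set v2 : ℝ → ℝ := fun x => 2 * c₂ - s * β ^ 2 * Real.exp (-β * x) with hv2def
  have hexp : ∀ x : ℝ, HasDerivAt (fun y => Real.exp (-β * y)) (Real.exp (-β * x) * -β) x := by
    intro x
    have h := ((hasDerivAt_id x).const_mul (-β)).exp
    simpa using h
  have hd0 : ∀ x : ℝ, HasDerivAt v0 (v1 x) x := by
    intro x
    have h : HasDerivAt v0 (c₂ * (2 * x ^ 1) + c₁ * 1 + 0 - s * (Real.exp (-β * x) * -β)) x := by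
      exact ((((hasDerivAt_pow 2 x).const_mul c₂).add ((hasDerivAt_id x).const_mul c₁)).add
        (hasDerivAt_const x c₀)).sub ((hexp x).const_mul s)
    convert h using 1
    simp [hv1def]; ring
  have hd1 : ∀ x : ℝ, HasDerivAt v1 (v2 x) x := by
    intro x
    have h : HasDerivAt v1 (2 * c₂ * 1 + 0 + s * β * (Real.exp (-β * x) * -β)) x := by
      exact ((((hasDerivAt_id x).const_mul (2 * c₂)).add (hasDerivAt_const x c₁)).add
        ((hexp x).const_mul (s * β)))
    convert h using 1
    simp [hv2def]; ring
  have hd2 : ∀ x : ℝ, HasDerivAt v2 (s * β ^ 3 * Real.exp (-β * x)) x := by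
    intro x
    have h : HasDerivAt v2 (0 - s * β ^ 2 * (Real.exp (-β * x) * -β)) x := by
      exact (hasDerivAt_const x (2 * c₂)).sub ((hexp x).const_mul (s * β ^ 2))
    convert h using 1
    ring
  -- v2 is strictly antitone
  have hanti : StrictAnti v2 := by
    apply strictAnti_of_deriv_neg
    intro x
    rw [(hd2 x).deriv]
    have hβ2 : 0 < β ^ 2 := by nlinarith
    have hβ3 : β ^ 3 < 0 := by nlinarith
    have hex := Real.exp_pos (-β * x)
    have hp : 0 < s * -β ^ 3 * Real.exp (-β * x) :=
      mul_pos (mul_pos hs (by linarith)) hex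
    nlinarith [hp]
  -- v2 has at most one root
  have h2 : ∀ a b : ℝ, a < b → v2 a = 0 → v2 b = 0 → False := by
    intro a b hab ha hb
    exact absurd (ha.trans hb.symm) (ne_of_gt (by have := hanti hab; linarith [hanti hab]))
  -- v1 has at most two roots
  have h1 : ∀ a b c : ℝ, a < b → b < c → v1 a = 0 → v1 b = 0 → v1 c = 0 → False := by
    intro a b c hab hbc ha hb hc
    obtain ⟨p, hp, hp0⟩ := exists_hasDerivAt_eq_zero hab
      (fun x _ => (hd1 x).continuousAt.continuousWithinAt) (ha.trans hb.symm)
      (fun x _ => hd1 x)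
    obtain ⟨q, hq, hq0⟩ := exists_hasDerivAt_eq_zero hbc
      (fun x _ => (hd1 x).continuousAt.continuousWithinAt) (hb.trans hc.symm)
      (fun x _ => hd1 x)
    exact h2 p q (hp.2.trans hq.1) hp0 hq0
  -- v0 has at most three roots
  have h0 : ∀ a b c d : ℝ, a < b → b < c → c < d →
      v0 a = 0 → v0 b = 0 → v0 c = 0 → v0 d = 0 → False := by
    intro a b c d hab hbc hcd ha hb hc hd
    obtain ⟨p, hp, hp0⟩ := exists_hasDerivAt_eq_zero hab
      (fun x _ => (hd0 x).continuousAt.continuousWithinAt) (ha.trans hb.symm)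
      (fun x _ => hd0 x)
    obtain ⟨q, hq, hq0⟩ := exists_hasDerivAt_eq_zero hbc
      (fun x _ => (hd0 x).continuousAt.continuousWithinAt) (hb.trans hc.symm)
      (fun x _ => hd0 x)
    obtain ⟨r, hr, hr0⟩ := exists_hasDerivAt_eq_zero hcd
      (fun x _ => (hd0 x).continuousAt.continuousWithinAt) (hc.trans hd.symm)
      (fun x _ => hd0 x)
    exact h1 p q r (hp.2.trans hq.1) (hq.2.trans hr.1) hp0 hq0 hr0
  -- solution set equals zero set of v0
  have hset : {x : ℝ | Real.exp (β * x) * (c₂ * x ^ 2 + c₁ * x + c₀) = s} ⊆ {x | v0 x = 0} := by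
    intro x hx
    simp only [mem_setOf_eq] at hx ⊢
    have he : Real.exp (β * x) ≠ 0 := (Real.exp_pos _).ne'
    have : Real.exp (-β * x) = (Real.exp (β * x))⁻¹ := by
      rw [← Real.exp_neg]; ring_nf
    simp only [hv0def, this]
    field_simp
    rw [mul_comm x β]
    nlinarith [hx]
  -- conclude
  by_contra hcon
  push_neg at hcon
  have h4 : (4 : ℕ∞) ≤ {x : ℝ | Real.exp (β * x) * (c₂ * x ^ 2 + c₁ * x + c₀) = s}.encard := by
    exact Order.add_one_le_of_lt hcon
  obtain ⟨t, hts, htcard⟩ := Set.exists_subset_encard_eq h4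
  have htfin : t.Finite := Set.finite_of_encard_eq_coe (k := 4) (by exact_mod_cast htcard)
  have htc : htfin.toFinset.card = 4 := by
    have := htfin.encard_eq_coe_toFinset_card
    rw [htcard] at this
    exact_mod_cast this.symm
  set e := htfin.toFinset.orderIsoOfFin htc with he
  have hmem : ∀ i : Fin 4, (e i : ℝ) ∈ t := fun i => htfin.mem_toFinset.mp (e i).2
  have hroot : ∀ i : Fin 4, v0 (e i : ℝ) = 0 := fun i => hset (hts (hmem i))
  have hmono : ∀ i j : Fin 4, i < j → (e i : ℝ) < (e j : ℝ) := by
    intro i j hij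
    exact_mod_cast e.strictMono hij
  exact h0 _ _ _ _ (hmono 0 1 (by decide)) (hmono 1 2 (by decide)) (hmono 2 3 (by decide))
    (hroot 0) (hroot 1) (hroot 2) (hroot 3)
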